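/- In the group G = ⟨x, y | x² = y²⟩, the element [x, y] = xyx⁻¹y⁻¹ satisfies the generalized torsion relation (x[x,y]x⁻¹)(xy[x,y]y⁻¹x⁻¹)[x,y](y[x,y]y⁻¹) = 1. -/
import Mathlib


def sqRel : Set (FreeGroup (Fin 2)) :=
  {FreeGroup.of 0 ^ 2 * (FreeGroup.of 1 ^ 2)⁻¹}

def x7 : PresentedGroup sqRel := PresentedGroup.of 0
def y7 : PresentedGroup sqRel := PresentedGroup.of 1

lemma sq_eq : x7 ^ 2 = y7 ^ 2 := by
  have hmem : (FreeGroup.of 0 ^ 2 * (FreeGroup.of 1 ^ 2)⁻¹ : FreeGroup (Fin 2)) ∈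
      Subgroup.normalClosure sqRel :=
    Subgroup.subset_normalClosure rfl
  have h1 : (QuotientGroup.mk (FreeGroup.of 0 ^ 2 * (FreeGroup.of 1 ^ 2)⁻¹) :
      PresentedGroup sqRel) = 1 := (QuotientGroup.eq_one_iff _).mpr hmem
  have h2 : x7 ^ 2 * (y7 ^ 2)⁻¹ = 1 := h1
  exact mul_inv_eq_one.mp h2

theorem stmt7 :
    (x7 * (x7 * y7 * x7⁻¹ * y7⁻¹) * x7⁻¹) *
    ((x7 * y7) * (x7 * y7 * x7⁻¹ * y7⁻¹) * (x7 * y7)⁻¹) *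
    (x7 * y7 * x7⁻¹ * y7⁻¹) *
    (y7 * (x7 * y7 * x7⁻¹ * y7⁻¹) * y7⁻¹) = 1 := by
  have h := sq_eq
  have hAB : x7 ^ 2 * y7 ^ 2 * x7⁻¹ * (y7 ^ 2)⁻¹ * x7⁻¹ = 1 := by
    rw [← h]; group
  have hCD : x7 * y7 ^ 2 * x7⁻¹ * (y7 ^ 2)⁻¹ = 1 := by
    rw [← h]; group
  calc (x7 * (x7 * y7 * x7⁻¹ * y7⁻¹) * x7⁻¹) *
      ((x7 * y7) * (x7 * y7 * x7⁻¹ * y7⁻¹) * (x7 * y7)⁻¹) *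
      (x7 * y7 * x7⁻¹ * y7⁻¹) *
      (y7 * (x7 * y7 * x7⁻¹ * y7⁻¹) * y7⁻¹)
      = (x7 ^ 2 * y7 ^ 2 * x7⁻¹ * (y7 ^ 2)⁻¹ * x7⁻¹) *
        (x7 * y7 ^ 2 * x7⁻¹ * (y7 ^ 2)⁻¹) := by
        group
        rw [zpow_two, zpow_two]
        group
    _ = 1 := by rw [hAB, hCD, one_mul]
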